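/- Let q ∈ ℕ and let b ∈ ℤ[x_1,…,x_n]. For m ∈ ℤ define S̃_{m,q} = Σ_{k ∈ (U_q)^n} e(b(k)·m/q), where U_q is the set of units modulo q and e(x) = e^{2πix}. Then the function B(q) = φ(q)^{−n} Σ_{m ∈ U_q} S̃_{m,q} is multiplicative in q: if gcd(q_1, q_2) = 1 then B(q_1 q_2) = B(q_1) B(q_2). -/

import Mathlib

open Finset

/-- The set of units modulo `q`, represented by residues in `[0, q)` coprime to `q`. -/
def Uq (q : ℕ) : Finset ℕ := (range q).filter (fun m => Nat.Coprime m q)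

/-- The exponential sum `S̃_{m,q} = ∑_{k ∈ U_q^n} e(b(k) m / q)`. -/
noncomputable def Stilde {n : ℕ} (b : MvPolynomial (Fin n) ℤ) (q m : ℕ) : ℂ :=
  ∑ k ∈ Fintype.piFinset (fun _ : Fin n => Uq q),
    Complex.exp (2 * Real.pi * Complex.I *
      (((MvPolynomial.eval (fun i => (k i : ℤ)) b : ℤ) : ℂ) * (m : ℂ) / (q : ℂ)))

/-- `B(q) = φ(q)^{-n} ∑_{m ∈ U_q} S̃_{m,q}`. -/
noncomputable def Bq {n : ℕ} (b : MvPolynomial (Fin n) ℤ) (q : ℕ) : ℂ :=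
  (1 / ((Nat.totient q : ℂ)) ^ n) * ∑ m ∈ Uq q, Stilde b q m

/-! ### Auxiliary definitions and lemmas -/

noncomputable def Efn (q : ℕ) (t : ℤ) : ℂ :=
  Complex.exp (2 * Real.pi * Complex.I * ((t : ℂ) / (q : ℂ)))

lemma Efn_mod {q : ℕ} (hq : q ≠ 0) {t t' : ℤ} (h : (q:ℤ) ∣ t - t') :
    Efn q t = Efn q t' := by
  obtain ⟨c, hc⟩ := h
  have ht : t = t' + q * c := by linarith
  have hqC : (q : ℂ) ≠ 0 := Nat.cast_ne_zero.mpr hq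
  unfold Efn
  rw [ht]
  push_cast
  rw [show (2 * Real.pi * Complex.I * ((↑t' + ↑q * ↑c) / ↑q)) =
      2 * Real.pi * Complex.I * (↑t' / ↑q) + (c : ℂ) * (2 * Real.pi * Complex.I) by
    field_simp]
  rw [Complex.exp_add, Complex.exp_int_mul_two_pi_mul_I, mul_one]

lemma Efn_split {q₁ q₂ : ℕ} (hq₁ : q₁ ≠ 0) (hq₂ : q₂ ≠ 0) (t m₁ m₂ : ℤ) :
    Efn (q₁ * q₂) (t * (m₁ * q₂ + m₂ * q₁)) = Efn q₁ (t * m₁) * Efn q₂ (t * m₂) := by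
  have h1 : (q₁ : ℂ) ≠ 0 := Nat.cast_ne_zero.mpr hq₁
  have h2 : (q₂ : ℂ) ≠ 0 := Nat.cast_ne_zero.mpr hq₂
  unfold Efn
  rw [← Complex.exp_add]
  congr 1
  push_cast
  field_simp

lemma eval_mod {n N : ℕ} (b : MvPolynomial (Fin n) ℤ) {x y : Fin n → ℤ}
    (h : ∀ i, (N:ℤ) ∣ x i - y i) :
    (N:ℤ) ∣ MvPolynomial.eval x b - MvPolynomial.eval y b := by
  have key : ∀ z : Fin n → ℤ, ((MvPolynomial.eval z b : ℤ) : ZMod N)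
      = MvPolynomial.eval₂ (Int.castRingHom (ZMod N)) (fun i => ((z i : ℤ) : ZMod N)) b := by
    intro z
    have h1 := MvPolynomial.eval₂_comp_left (Int.castRingHom (ZMod N)) (RingHom.id ℤ) z b
    rw [MvPolynomial.eval₂_id] at h1
    convert h1 using 2 <;> simp [Function.comp_def]
  have hx : (fun i => ((x i : ℤ) : ZMod N)) = (fun i => ((y i : ℤ) : ZMod N)) := by
    funext i
    have h0 : ((x i - y i : ℤ) : ZMod N) = 0 :=
      (ZMod.intCast_zmod_eq_zero_iff_dvd _ _).mpr (h i)
    push_cast at h0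
    linear_combination h0
  have heq : ((MvPolynomial.eval x b : ℤ) : ZMod N) = ((MvPolynomial.eval y b : ℤ) : ZMod N) := by
    rw [key x, key y, hx]
  exact Int.ModEq.dvd ((ZMod.intCast_eq_intCast_iff' _ _ _).mp heq).symm

lemma sum_reindex {α β : Type*} [DecidableEq β] (s : Finset α) (t : Finset β)
    (g : α → β) (hmem : ∀ a ∈ s, g a ∈ t) (hinj : Set.InjOn g s)
    (hcard : t.card = s.card) (f : β → ℂ) :
    ∑ x ∈ t, f x = ∑ a ∈ s, f (g a) := by
  have himg : s.image g = t := by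
    apply Finset.eq_of_subset_of_card_le
    · intro x hx; obtain ⟨a, ha, rfl⟩ := Finset.mem_image.mp hx; exact hmem a ha
    · rw [Finset.card_image_of_injOn hinj, hcard]
  rw [← himg, Finset.sum_image (fun a ha b hb hab => hinj ha hb hab)]

lemma mem_Uq {q m : ℕ} : m ∈ Uq q ↔ m < q ∧ Nat.Coprime m q := by simp [Uq]

lemma Uq_card (q : ℕ) : (Uq q).card = Nat.totient q := by
  unfold Uq Nat.totient
  congr 1
  apply Finset.filter_congr
  intro x _
  simp [Nat.coprime_comm]

lemma coprime_mod {x Q : ℕ} (hx : Nat.Coprime x Q) : Nat.Coprime (x % Q) Q := by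
  rw [Nat.Coprime, ← Nat.gcd_rec, Nat.gcd_comm]; exact hx

lemma beta_inj {q₁ q₂ : ℕ} (h : Nat.Coprime q₁ q₂)
    {a b a' b' : ℕ} (ha : a < q₁) (ha' : a' < q₁) (hb : b < q₂) (hb' : b' < q₂)
    (heq : (a * q₂ + b * q₁) % (q₁ * q₂) = (a' * q₂ + b' * q₁) % (q₁ * q₂)) :
    a = a' ∧ b = b' := by
  have hmod : a * q₂ + b * q₁ ≡ a' * q₂ + b' * q₁ [MOD q₁ * q₂] := heq
  have h1 : a * q₂ + b * q₁ ≡ a' * q₂ + b' * q₁ [MOD q₁] :=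
    Nat.ModEq.of_mul_right q₂ hmod
  have h2 : a * q₂ + b * q₁ ≡ a' * q₂ + b' * q₁ [MOD q₂] :=
    Nat.ModEq.of_mul_left q₁ hmod
  have ha2 : a * q₂ ≡ a' * q₂ [MOD q₁] := by
    have e1 : a * q₂ + b * q₁ ≡ a * q₂ + 0 [MOD q₁] :=
      (Nat.ModEq.refl (a * q₂)).add (Nat.modEq_zero_iff_dvd.mpr ⟨b, mul_comm _ _⟩)
    have e2 : a' * q₂ + b' * q₁ ≡ a' * q₂ + 0 [MOD q₁] :=
      (Nat.ModEq.refl (a' * q₂)).add (Nat.modEq_zero_iff_dvd.mpr ⟨b', mul_comm _ _⟩)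
    simpa using (e1.symm.trans h1).trans e2
  have hb2 : b * q₁ ≡ b' * q₁ [MOD q₂] := by
    have e1 : a * q₂ + b * q₁ ≡ 0 + b * q₁ [MOD q₂] :=
      (Nat.modEq_zero_iff_dvd.mpr ⟨a, mul_comm _ _⟩ : a * q₂ ≡ 0 [MOD q₂]).add
        (Nat.ModEq.refl (b * q₁))
    have e2 : a' * q₂ + b' * q₁ ≡ 0 + b' * q₁ [MOD q₂] :=
      (Nat.modEq_zero_iff_dvd.mpr ⟨a', mul_comm _ _⟩ : a' * q₂ ≡ 0 [MOD q₂]).add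
        (Nat.ModEq.refl (b' * q₁))
    simpa using (e1.symm.trans h2).trans e2
  have haa : a ≡ a' [MOD q₁] := Nat.ModEq.cancel_right_of_coprime h ha2
  have hbb : b ≡ b' [MOD q₂] := Nat.ModEq.cancel_right_of_coprime h.symm hb2
  exact ⟨by rwa [Nat.ModEq, Nat.mod_eq_of_lt ha, Nat.mod_eq_of_lt ha'] at haa,
         by rwa [Nat.ModEq, Nat.mod_eq_of_lt hb, Nat.mod_eq_of_lt hb'] at hbb⟩

lemma beta_mem {q₁ q₂ : ℕ} (hq₁ : 0 < q₁) (hq₂ : 0 < q₂) (h : Nat.Coprime q₁ q₂) {a b : ℕ}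
    (ha : a ∈ Uq q₁) (hb : b ∈ Uq q₂) :
    (a * q₂ + b * q₁) % (q₁ * q₂) ∈ Uq (q₁ * q₂) := by
  rw [mem_Uq] at ha hb ⊢
  refine ⟨Nat.mod_lt _ (Nat.mul_pos hq₁ hq₂), coprime_mod ?_⟩
  apply Nat.Coprime.mul_right
  · rw [Nat.coprime_add_mul_right_left (a * q₂) q₁ b]
    exact Nat.Coprime.mul ha.2 h.symm
  · rw [add_comm, Nat.coprime_add_mul_right_left (b * q₁) q₂ a]
    exact Nat.Coprime.mul hb.2 h

lemma rho_mem {q c : ℕ} (hq : 0 < q) (hc : Nat.Coprime c q) {a : ℕ} (ha : a ∈ Uq q) :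
    (c * a) % q ∈ Uq q := by
  rw [mem_Uq] at ha ⊢
  exact ⟨Nat.mod_lt _ hq, coprime_mod (Nat.Coprime.mul hc ha.2)⟩

lemma rho_inj {q c : ℕ} (hc : Nat.Coprime c q) {a a' : ℕ} (ha : a < q) (ha' : a' < q)
    (heq : (c * a) % q = (c * a') % q) : a = a' := by
  have : a ≡ a' [MOD q] := Nat.ModEq.cancel_left_of_coprime hc.symm heq
  rwa [Nat.ModEq, Nat.mod_eq_of_lt ha, Nat.mod_eq_of_lt ha'] at this

lemma Stilde_eq {n : ℕ} (b : MvPolynomial (Fin n) ℤ) (q m : ℕ) :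
    Stilde b q m = ∑ k ∈ Fintype.piFinset (fun _ : Fin n => Uq q),
      Efn q (MvPolynomial.eval (fun i => (k i : ℤ)) b * m) := by
  unfold Stilde Efn
  apply Finset.sum_congr rfl
  intro k _
  congr 1
  push_cast
  ring

lemma natmod_modeq (x q : ℕ) : (((x % q : ℕ) : ℤ)) ≡ (x : ℤ) [ZMOD (q:ℤ)] := by
  push_cast
  exact Int.emod_emod_of_dvd _ dvd_rfl

set_option maxHeartbeats 1000000 in
lemma term_eq {n : ℕ} (b : MvPolynomial (Fin n) ℤ) {q₁ q₂ : ℕ}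
    (hq₁ : 0 < q₁) (hq₂ : 0 < q₂)
    (a c : ℕ) (k₁ k₂ : Fin n → ℕ) :
    Efn (q₁ * q₂) (MvPolynomial.eval
        (fun i => (((k₁ i * q₂ + k₂ i * q₁) % (q₁ * q₂) : ℕ) : ℤ)) b
      * (((a * q₂ + c * q₁) % (q₁ * q₂) : ℕ) : ℤ))
    = Efn q₁ (MvPolynomial.eval (fun i => (((q₂ * k₁ i) % q₁ : ℕ) : ℤ)) b * (a : ℤ))
      * Efn q₂ (MvPolynomial.eval (fun i => (((q₁ * k₂ i) % q₂ : ℕ) : ℤ)) b * (c : ℤ)) := by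
  have hQ : q₁ * q₂ ≠ 0 := Nat.mul_ne_zero hq₁.ne' hq₂.ne'
  have h1 : q₁ ≠ 0 := hq₁.ne'
  have h2 : q₂ ≠ 0 := hq₂.ne'
  -- raw values
  set E := fun (x : Fin n → ℤ) => MvPolynomial.eval x b with hE
  have step1 : Efn (q₁ * q₂) (E (fun i => (((k₁ i * q₂ + k₂ i * q₁) % (q₁ * q₂) : ℕ) : ℤ))
        * (((a * q₂ + c * q₁) % (q₁ * q₂) : ℕ) : ℤ))
      = Efn (q₁ * q₂) (E (fun i => ((k₁ i : ℤ) * q₂ + (k₂ i : ℤ) * q₁))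
        * ((a : ℤ) * q₂ + (c : ℤ) * q₁)) := by
    apply Efn_mod hQ
    have he : ((q₁*q₂ : ℕ):ℤ) ∣ E (fun i => (((k₁ i * q₂ + k₂ i * q₁) % (q₁ * q₂) : ℕ) : ℤ))
        - E (fun i => ((k₁ i : ℤ) * q₂ + (k₂ i : ℤ) * q₁)) := by
      apply eval_mod
      intro i
      have := (natmod_modeq (k₁ i * q₂ + k₂ i * q₁) (q₁ * q₂)).dvd
      push_cast at this ⊢
      exact dvd_sub_comm.mp this
    have hm : ((q₁*q₂:ℕ):ℤ) ∣ (((a * q₂ + c * q₁) % (q₁ * q₂) : ℕ) : ℤ)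
        - ((a : ℤ) * q₂ + (c : ℤ) * q₁) := by
      have := (natmod_modeq (a * q₂ + c * q₁) (q₁ * q₂)).dvd
      push_cast at this ⊢
      exact dvd_sub_comm.mp this
    -- product congruence
    have key : ∀ (t t' m m' : ℤ), ((q₁*q₂:ℕ):ℤ) ∣ t - t' → ((q₁*q₂:ℕ):ℤ) ∣ m - m' →
        ((q₁*q₂:ℕ):ℤ) ∣ t * m - t' * m' := by
      intro t t' m m' ⟨u, hu⟩ ⟨v, hv⟩
      refine ⟨u * m + t' * v, ?_⟩
      have : t = t' + (q₁*q₂:ℕ) * u := by linarith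
      have hm2 : m = m' + (q₁*q₂:ℕ) * v := by linarith
      rw [this, hm2]; push_cast; ring
    have := key _ _ _ _ he hm
    push_cast at this ⊢
    convert this using 2
  rw [step1]
  rw [Efn_split h1 h2]
  congr 1
  · apply Efn_mod h1
    have he : (q₁:ℤ) ∣ E (fun i => ((k₁ i : ℤ) * q₂ + (k₂ i : ℤ) * q₁))
        - E (fun i => (((q₂ * k₁ i) % q₁ : ℕ) : ℤ)) := by
      apply eval_mod
      intro i
      have h3 := (natmod_modeq (q₂ * k₁ i) q₁).dvd
      push_cast at h3 ⊢
      obtain ⟨u, hu⟩ := h3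
      exact ⟨k₂ i + u, by linarith⟩
    obtain ⟨u, hu⟩ := he
    exact ⟨u * a, by rw [← sub_mul, hu]; ring⟩
  · apply Efn_mod h2
    have he : (q₂:ℤ) ∣ E (fun i => ((k₁ i : ℤ) * q₂ + (k₂ i : ℤ) * q₁))
        - E (fun i => (((q₁ * k₂ i) % q₂ : ℕ) : ℤ)) := by
      apply eval_mod
      intro i
      have h3 := (natmod_modeq (q₁ * k₂ i) q₂).dvd
      push_cast at h3 ⊢
      obtain ⟨u, hu⟩ := h3
      exact ⟨k₁ i + u, by linarith⟩
    obtain ⟨u, hu⟩ := he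
    exact ⟨u * c, by rw [← sub_mul, hu]; ring⟩

set_option maxHeartbeats 1000000 in
lemma T_mul {n : ℕ} (b : MvPolynomial (Fin n) ℤ) (q₁ q₂ : ℕ)
    (hq₁ : 0 < q₁) (hq₂ : 0 < q₂) (h : Nat.Coprime q₁ q₂) :
    (∑ m ∈ Uq (q₁ * q₂), ∑ k ∈ Fintype.piFinset (fun _ : Fin n => Uq (q₁ * q₂)),
        Efn (q₁ * q₂) (MvPolynomial.eval (fun i => (k i : ℤ)) b * (m : ℤ)))
    = (∑ m ∈ Uq q₁, ∑ k ∈ Fintype.piFinset (fun _ : Fin n => Uq q₁),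
        Efn q₁ (MvPolynomial.eval (fun i => (k i : ℤ)) b * (m : ℤ)))
    * (∑ m ∈ Uq q₂, ∑ k ∈ Fintype.piFinset (fun _ : Fin n => Uq q₂),
        Efn q₂ (MvPolynomial.eval (fun i => (k i : ℤ)) b * (m : ℤ))) := by
  have hcardm : (Uq (q₁ * q₂)).card = (Uq q₁ ×ˢ Uq q₂).card := by
    rw [Uq_card, Nat.totient_mul h, card_product, Uq_card, Uq_card]
  have hcardk : (Fintype.piFinset (fun _ : Fin n => Uq (q₁ * q₂))).card
      = ((Fintype.piFinset (fun _ : Fin n => Uq q₁)) ×ˢ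
         (Fintype.piFinset (fun _ : Fin n => Uq q₂))).card := by
    rw [Fintype.card_piFinset, card_product, Fintype.card_piFinset, Fintype.card_piFinset]
    simp only [Uq_card, Nat.totient_mul h, Finset.prod_const, Finset.card_univ,
      Fintype.card_fin, mul_pow]
  -- reindex m
  rw [sum_reindex (Uq q₁ ×ˢ Uq q₂) (Uq (q₁ * q₂))
      (fun p => (p.1 * q₂ + p.2 * q₁) % (q₁ * q₂))
      (fun p hp => beta_mem hq₁ hq₂ h (mem_product.mp hp).1 (mem_product.mp hp).2)
      (by
        intro p hp p' hp' heq
        simp only [coe_product, Set.mem_prod, mem_coe, mem_Uq] at hp hp'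
        obtain ⟨h1, h2⟩ := beta_inj h hp.1.1 hp'.1.1 hp.2.1 hp'.2.1 heq
        exact Prod.ext h1 h2)
      hcardm]
  -- reindex k pointwise inside each summand
  have step2 : ∀ p ∈ Uq q₁ ×ˢ Uq q₂,
      (∑ k ∈ Fintype.piFinset (fun _ : Fin n => Uq (q₁ * q₂)),
        Efn (q₁ * q₂) (MvPolynomial.eval (fun i => (k i : ℤ)) b
          * (((p.1 * q₂ + p.2 * q₁) % (q₁ * q₂) : ℕ) : ℤ)))
      = (∑ k ∈ Fintype.piFinset (fun _ : Fin n => Uq q₁),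
          Efn q₁ (MvPolynomial.eval (fun i => (k i : ℤ)) b * (p.1 : ℤ)))
        * (∑ k ∈ Fintype.piFinset (fun _ : Fin n => Uq q₂),
          Efn q₂ (MvPolynomial.eval (fun i => (k i : ℤ)) b * (p.2 : ℤ))) := by
    rintro ⟨a, c⟩ hp
    rw [sum_reindex ((Fintype.piFinset (fun _ : Fin n => Uq q₁)) ×ˢ
          (Fintype.piFinset (fun _ : Fin n => Uq q₂)))
        (Fintype.piFinset (fun _ : Fin n => Uq (q₁ * q₂)))
        (fun r => fun i => (r.1 i * q₂ + r.2 i * q₁) % (q₁ * q₂))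
        (by
          intro r hr
          rw [mem_product] at hr
          rw [Fintype.mem_piFinset]
          intro i
          exact beta_mem hq₁ hq₂ h (Fintype.mem_piFinset.mp hr.1 i)
            (Fintype.mem_piFinset.mp hr.2 i))
        (by
          intro r hr r' hr' heq
          simp only [coe_product, Set.mem_prod, mem_coe, Fintype.mem_piFinset] at hr hr'
          have : ∀ i, r.1 i = r'.1 i ∧ r.2 i = r'.2 i := by
            intro i
            have hri := mem_Uq.mp (hr.1 i); have hri2 := mem_Uq.mp (hr.2 i)
            have hri' := mem_Uq.mp (hr'.1 i); have hri2' := mem_Uq.mp (hr'.2 i)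
            exact beta_inj h hri.1 hri'.1 hri2.1 hri2'.1 (congrFun heq i)
          exact Prod.ext (funext fun i => (this i).1) (funext fun i => (this i).2))
        hcardk]
    -- apply term_eq pointwise
    rw [Finset.sum_congr rfl (fun r hr => term_eq b hq₁ hq₂ a c r.1 r.2)]
    -- factor product of sums
    rw [Finset.sum_product]
    dsimp only
    rw [← Finset.sum_mul_sum]
    -- now remove the rho twists
    congr 1
    · rw [sum_reindex (Fintype.piFinset (fun _ : Fin n => Uq q₁))
          (Fintype.piFinset (fun _ : Fin n => Uq q₁))
          (fun k => fun i => (q₂ * k i) % q₁)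
          (fun k hk => Fintype.mem_piFinset.mpr fun i =>
            rho_mem hq₁ h.symm (Fintype.mem_piFinset.mp hk i))
          (by
            intro k hk k' hk' heq
            simp only [mem_coe, Fintype.mem_piFinset] at hk hk'
            funext i
            exact rho_inj h.symm (mem_Uq.mp (hk i)).1 (mem_Uq.mp (hk' i)).1 (congrFun heq i))
          rfl
          (fun k => Efn q₁ (MvPolynomial.eval (fun i => (k i : ℤ)) b * (a : ℤ)))]
    · rw [sum_reindex (Fintype.piFinset (fun _ : Fin n => Uq q₂))
          (Fintype.piFinset (fun _ : Fin n => Uq q₂))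
          (fun k => fun i => (q₁ * k i) % q₂)
          (fun k hk => Fintype.mem_piFinset.mpr fun i =>
            rho_mem hq₂ h (Fintype.mem_piFinset.mp hk i))
          (by
            intro k hk k' hk' heq
            simp only [mem_coe, Fintype.mem_piFinset] at hk hk'
            funext i
            exact rho_inj h (mem_Uq.mp (hk i)).1 (mem_Uq.mp (hk' i)).1 (congrFun heq i))
          rfl
          (fun k => Efn q₂ (MvPolynomial.eval (fun i => (k i : ℤ)) b * (c : ℤ)))]
  rw [Finset.sum_congr rfl step2]
  rw [Finset.sum_product]
  dsimp only
  rw [← Finset.sum_mul_sum]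

theorem stmt12 {n : ℕ} (b : MvPolynomial (Fin n) ℤ) (q₁ q₂ : ℕ)
    (hq₁ : 0 < q₁) (hq₂ : 0 < q₂) (h : Nat.Coprime q₁ q₂) :
    Bq b (q₁ * q₂) = Bq b q₁ * Bq b q₂ := by
  unfold Bq
  simp only [Stilde_eq]
  rw [T_mul b q₁ q₂ hq₁ hq₂ h]
  rw [Nat.totient_mul h]
  push_cast
  ring
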